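/- VN-side derivative identity: For a multi-edge type D-GLDPC ensemble in which every variable-node local code has minimum distance at least 2 and no encoded bit is punctured, for every ε ∈ (0,1) and all l,m ∈ E, the partial derivative of the aggregate variable-node EXIT function I_{EV,l}(·,ε) with respect to its m-th argument, evaluated at the all-ones point I = (1,…,1), equals P^{l,m}(ε) = Σ_{γ∈F_{V2}} (λ_{γ,l}/q_{γ,l}) Σ_{u=1}^{k_γ} χ_{2,u}^{(γ)}(l,m) ε^u. -/

import Mathlib

open scoped Classical

noncomputable section

namespace MET

/-- Hamming weight of a binary vector. -/
def hWeight {m : ℕ} (x : Fin m → ZMod 2) : ℕ :=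
  (Finset.univ.filter fun i => x i ≠ 0).card

/-- The row space of `G` (the local code) has minimum Hamming weight at least 2. -/
def HasMinDistGE2 {k q : ℕ} (G : Matrix (Fin k) (Fin q) (ZMod 2)) : Prop :=
  ∀ x : Fin k → ZMod 2, Matrix.vecMul x G ≠ 0 → 2 ≤ hWeight (Matrix.vecMul x G)

/-- The row space of `G` has minimum Hamming weight exactly 2. -/
def HasMinDistEq2 {k q : ℕ} (G : Matrix (Fin k) (Fin q) (ZMod 2)) : Prop :=
  HasMinDistGE2 G ∧ ∃ x : Fin k → ZMod 2, hWeight (Matrix.vecMul x G) = 2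

/-- The weight-2 vector supported on `{i,j}`. -/
def wt2vec {q : ℕ} (i j : Fin q) : Fin q → ZMod 2 :=
  fun r => if r = i ∨ r = j then 1 else 0

/-- Number of columns of edge type `l`. -/
def colCount {q n : ℕ} (τ : Fin q → Fin n) (l : Fin n) : ℕ :=
  (Finset.univ.filter fun j => τ j = l).card

/-- Rank of the matrix formed by the columns of `G` indexed by `A` together with the columns
of the `k × k` identity matrix indexed by `T`. -/
def colRank {k q : ℕ} (G : Matrix (Fin k) (Fin q) (ZMod 2))
    (A : Finset (Fin q)) (T : Finset (Fin k)) : ℕ :=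
  Matrix.rank (Matrix.of fun (i : Fin k) (j : {x // x ∈ A} ⊕ {x // x ∈ T}) =>
    Sum.elim (fun a => G i a.1) (fun t => if i = t.1 then (1 : ZMod 2) else 0) j)

/-- Multi-type split information function `ẽ_{g;u}` of a VN generator matrix. -/
def eTilde {n k q : ℕ} (G : Matrix (Fin k) (Fin q) (ZMod 2)) (τ : Fin q → Fin n)
    (g : Fin n → ℕ) (u : ℕ) : ℕ :=
  ∑ A ∈ Finset.univ.filter (fun A : Finset (Fin q) =>
      ∀ l, (A.filter fun j => τ j = l).card = g l),
    ∑ T ∈ Finset.univ.filter (fun T : Finset (Fin k) => T.card = u),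
      colRank G A T

/-- Multi-type information function `ẽ_g` of a CN generator matrix. -/
def eTildeC {n h s : ℕ} (G : Matrix (Fin h) (Fin s) (ZMod 2)) (τ : Fin s → Fin n)
    (g : Fin n → ℕ) : ℕ :=
  ∑ A ∈ Finset.univ.filter (fun A : Finset (Fin s) =>
      ∀ l, (A.filter fun j => τ j = l).card = g l),
    colRank G A ∅

/-- `χ_{2,u}(l,m)`: ordered pairs of distinct columns of types `l,m` supporting a weight-2
codeword generated by a weight-`u` input word. -/
def chi2 {n k q : ℕ} (G : Matrix (Fin k) (Fin q) (ZMod 2)) (τ : Fin q → Fin n)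
    (u : ℕ) (l m : Fin n) : ℕ :=
  (Finset.univ.filter fun p : Fin q × Fin q =>
    p.1 ≠ p.2 ∧ τ p.1 = l ∧ τ p.2 = m ∧
      ∃ x : Fin k → ZMod 2, hWeight x = u ∧ Matrix.vecMul x G = wt2vec p.1 p.2).card

/-- `ξ_2(l,m)`: ordered pairs of distinct coordinates of types `l,m` supporting a weight-2
codeword of the row space. -/
def xi2 {n h s : ℕ} (G : Matrix (Fin h) (Fin s) (ZMod 2)) (τ : Fin s → Fin n)
    (l m : Fin n) : ℕ :=
  (Finset.univ.filter fun p : Fin s × Fin s =>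
    p.1 ≠ p.2 ∧ τ p.1 = l ∧ τ p.2 = m ∧
      ∃ x : Fin h → ZMod 2, Matrix.vecMul x G = wt2vec p.1 p.2).card

/-- Range of the tuple `t`: `0 ≤ t l ≤ q l` for `l ≠ e` and `0 ≤ t e ≤ q e - 1`. -/
def tRange {n : ℕ} (q : Fin n → ℕ) (e : Fin n) : Finset (Fin n → ℕ) :=
  Fintype.piFinset fun l => Finset.range (if l = e then q l else q l + 1)

/-- The coefficient `a^{(γ,e)}_{t,z}` of the VN EXIT function. -/
def aVN {n k q : ℕ} (G : Matrix (Fin k) (Fin q) (ZMod 2)) (τ : Fin q → Fin n)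
    (e : Fin n) (t : Fin n → ℕ) (z : ℕ) : ℝ :=
  ((colCount τ e - t e : ℕ) : ℝ) *
      (eTilde G τ (fun l => colCount τ l - t l) (k - z) : ℝ)
    - ((t e + 1 : ℕ) : ℝ) *
      (eTilde G τ (fun l => colCount τ l - t l - (if l = e then 1 else 0)) (k - z) : ℝ)

/-- The coefficient `a^{(δ,e)}_{t}` of the CN EXIT function. -/
def aCN {n h s : ℕ} (G : Matrix (Fin h) (Fin s) (ZMod 2)) (τ : Fin s → Fin n)
    (e : Fin n) (t : Fin n → ℕ) : ℝ :=
  ((colCount τ e - t e : ℕ) : ℝ) *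
      (eTildeC G τ (fun l => colCount τ l - t l) : ℝ)
    - ((t e + 1 : ℕ) : ℝ) *
      (eTildeC G τ (fun l => colCount τ l - t l - (if l = e then 1 else 0)) : ℝ)

/-- Per-type VN EXIT function `I_{EV,e}^{(γ)}(I, ε)`. -/
def IEV {n k q : ℕ} (G : Matrix (Fin k) (Fin q) (ZMod 2)) (τ : Fin q → Fin n)
    (e : Fin n) (I : Fin n → ℝ) (ε : ℝ) : ℝ :=
  1 - (1 / (colCount τ e : ℝ)) *
    ∑ z ∈ Finset.range (k + 1), ε ^ z * (1 - ε) ^ (k - z) *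
      ∑ t ∈ tRange (colCount τ) e,
        (∏ l, (1 - I l) ^ t l * (I l) ^ (colCount τ l - t l - (if l = e then 1 else 0))) *
          aVN G τ e t z

/-- Per-type CN EXIT function `I_{EC,e}^{(δ)}(I)`. -/
def IEC {n h s : ℕ} (G : Matrix (Fin h) (Fin s) (ZMod 2)) (τ : Fin s → Fin n)
    (e : Fin n) (I : Fin n → ℝ) : ℝ :=
  1 - (1 / (colCount τ e : ℝ)) *
    ∑ t ∈ tRange (colCount τ) e,
      (∏ l, (1 - I l) ^ t l * (I l) ^ (colCount τ l - t l - (if l = e then 1 else 0))) *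
        aCN G τ e t

/-- A variable node type: a `k × q` generator matrix over `GF(2)` with a typing of its
columns by edge types (no punctured bits). -/
structure VNType (n : ℕ) where
  k : ℕ
  q : ℕ
  G : Matrix (Fin k) (Fin q) (ZMod 2)
  τ : Fin q → Fin n

/-- A check node type: an `h × s` generator matrix over `GF(2)` with a typing of its
columns by edge types. -/
structure CNType (n : ℕ) where
  h : ℕ
  s : ℕ
  G : Matrix (Fin h) (Fin s) (ZMod 2)
  τ : Fin s → Fin n

/-- The variable-node side of a MET D-GLDPC ensemble. -/
structure VNSide (n : ℕ) where
  nV : ℕ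
  vn : Fin nV → VNType n
  lam : Fin nV → Fin n → ℝ
  lam_nonneg : ∀ γ l, 0 ≤ lam γ l
  lam_sum : ∀ l, ∑ γ, lam γ l = 1
  lam_pos_iff : ∀ γ l, 0 < lam γ l ↔ 0 < colCount (vn γ).τ l

/-- The check-node side of a MET D-GLDPC ensemble. -/
structure CNSide (n : ℕ) where
  nC : ℕ
  cn : Fin nC → CNType n
  rho : Fin nC → Fin n → ℝ
  rho_nonneg : ∀ δ l, 0 ≤ rho δ l
  rho_sum : ∀ l, ∑ δ, rho δ l = 1
  rho_pos_iff : ∀ δ l, 0 < rho δ l ↔ 0 < colCount (cn δ).τ l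

/-- A MET D-GLDPC ensemble. -/
structure Ensemble (n : ℕ) extends VNSide n, CNSide n

/-- All VN local codes have full-rank generator matrix and minimum distance at least 2. -/
def VNSide.Good {n : ℕ} (V : VNSide n) : Prop :=
  ∀ γ, ((V.vn γ).G).rank = (V.vn γ).k ∧ HasMinDistGE2 (V.vn γ).G

/-- All CN local codes have full-rank generator matrix and minimum distance at least 2. -/
def CNSide.Good {n : ℕ} (C : CNSide n) : Prop :=
  ∀ δ, ((C.cn δ).G).rank = (C.cn δ).h ∧ HasMinDistGE2 (C.cn δ).G

/-- The matrix `P(ε)` with entries `P^{l,m}(ε)`. -/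
def Pmat {n : ℕ} (V : VNSide n) (ε : ℝ) : Matrix (Fin n) (Fin n) ℝ :=
  Matrix.of fun l m =>
    ∑ γ, if HasMinDistEq2 (V.vn γ).G then
      (V.lam γ l / (colCount (V.vn γ).τ l : ℝ)) *
        ∑ u ∈ Finset.Icc 1 (V.vn γ).k, (chi2 (V.vn γ).G (V.vn γ).τ u l m : ℝ) * ε ^ u
    else 0

/-- The matrix `C` with entries `C^{l,m}`. -/
def Cmat {n : ℕ} (C : CNSide n) : Matrix (Fin n) (Fin n) ℝ :=
  Matrix.of fun l m =>
    ∑ δ, if HasMinDistEq2 (C.cn δ).G then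
      (C.rho δ l / (colCount (C.cn δ).τ l : ℝ)) * (xi2 (C.cn δ).G (C.cn δ).τ l m : ℝ)
    else 0

/-- Aggregate VN EXIT function `I_{EV,e}(I,ε)`. -/
def IEVagg {n : ℕ} (V : VNSide n) (e : Fin n) (I : Fin n → ℝ) (ε : ℝ) : ℝ :=
  ∑ γ ∈ Finset.univ.filter (fun γ => 0 < V.lam γ e),
    V.lam γ e * IEV (V.vn γ).G (V.vn γ).τ e I ε

/-- Aggregate CN EXIT function `I_{EC,e}(I)`. -/
def IECagg {n : ℕ} (C : CNSide n) (e : Fin n) (I : Fin n → ℝ) : ℝ :=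
  ∑ δ ∈ Finset.univ.filter (fun δ => 0 < C.rho δ e),
    C.rho δ e * IEC (C.cn δ).G (C.cn δ).τ e I

/-- The EXIT recursion `f(·,ε)`. -/
def exitMap {n : ℕ} (E : Ensemble n) (ε : ℝ) (I : Fin n → ℝ) : Fin n → ℝ :=
  fun e => IEVagg E.toVNSide e (fun m => IECagg E.toCNSide m I) ε

/-- Local stability of the fixed point `1` of the EXIT recursion. -/
def LocallyStable {n : ℕ} (E : Ensemble n) (ε : ℝ) : Prop :=
  ∃ U : Set (Fin n → ℝ), IsOpen U ∧ (fun _ => (1 : ℝ)) ∈ U ∧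
    ∀ I ∈ U ∩ Set.Icc (fun _ => (0 : ℝ)) (fun _ => (1 : ℝ)),
      Filter.Tendsto (fun m => (exitMap E ε)^[m] I) Filter.atTop (nhds fun _ => (1 : ℝ))

/-- Spectral radius of a real square matrix: the maximum modulus of its complex
eigenvalues. -/
def specRad {m : ℕ} (A : Matrix (Fin m) (Fin m) ℝ) : ℝ :=
  (spectralRadius ℂ (A.map fun x : ℝ => (x : ℂ))).toReal


section LinAlg
variable {k q : ℕ} (G : Matrix (Fin k) (Fin q) (ZMod 2)) (A : Finset (Fin q)) (T : Finset (Fin k))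

def solMod : Submodule (ZMod 2) (Fin k → ZMod 2) :=
  LinearMap.ker ((Matrix.of fun (i : Fin k) (j : {x // x ∈ A} ⊕ {x // x ∈ T}) =>
    Sum.elim (fun a => G i a.1) (fun t => if i = t.1 then (1 : ZMod 2) else 0) j).transpose.mulVecLin)

lemma mem_solMod (x : Fin k → ZMod 2) :
    x ∈ solMod G A T ↔ (∀ a ∈ A, Matrix.vecMul x G a = 0) ∧ (∀ t ∈ T, x t = 0) := by
  simp only [solMod, LinearMap.mem_ker, Matrix.mulVecLin_apply]
  constructor
  · intro h
    constructor
    · intro a ha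
      have := congrFun h (Sum.inl ⟨a, ha⟩)
      simpa [Matrix.mulVec, Matrix.vecMul, dotProduct, Matrix.transpose,
        mul_comm] using this
    · intro t ht
      have := congrFun h (Sum.inr ⟨t, ht⟩)
      simpa [Matrix.mulVec, dotProduct, Matrix.transpose, eq_comm] using this
  · rintro ⟨h1, h2⟩
    funext j
    rcases j with ⟨a, ha⟩ | ⟨t, ht⟩
    · have := h1 a ha
      simpa [Matrix.mulVec, Matrix.vecMul, dotProduct, Matrix.transpose,
        mul_comm] using this
    · have := h2 t ht
      simpa [Matrix.mulVec, dotProduct, Matrix.transpose, eq_comm] using this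

lemma colRank_add_finrank :
    colRank G A T + Module.finrank (ZMod 2) ↥(solMod G A T) = k := by
  classical
  rw [colRank, ← Matrix.rank_transpose, Matrix.rank]
  have := LinearMap.finrank_range_add_finrank_ker
    ((Matrix.of fun (i : Fin k) (j : {x // x ∈ A} ⊕ {x // x ∈ T}) =>
      Sum.elim (fun a => G i a.1) (fun t => if i = t.1 then (1 : ZMod 2) else 0)
        j).transpose.mulVecLin)
  rw [solMod]
  rw [this]
  simp

lemma colRank_eq_of_unique
    (h : ∀ x : Fin k → ZMod 2, (∀ a ∈ A, Matrix.vecMul x G a = 0) → (∀ t ∈ T, x t = 0) → x = 0) :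
    colRank G A T = k := by
  have hk : solMod G A T = ⊥ := by
    rw [Submodule.eq_bot_iff]
    intro x hx
    rw [mem_solMod] at hx
    exact h x hx.1 hx.2
  have := colRank_add_finrank G A T
  rw [hk] at this
  simpa using this

lemma colRank_eq_of_one (x0 : Fin k → ZMod 2) (hx0 : x0 ≠ 0)
    (hsol : (∀ a ∈ A, Matrix.vecMul x0 G a = 0) ∧ (∀ t ∈ T, x0 t = 0))
    (huniq : ∀ y : Fin k → ZMod 2, (∀ a ∈ A, Matrix.vecMul y G a = 0) → (∀ t ∈ T, y t = 0) →
      y = 0 ∨ y = x0) :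
    colRank G A T = k - 1 := by
  have hk : solMod G A T = Submodule.span (ZMod 2) {x0} := by
    apply le_antisymm
    · intro y hy
      rw [mem_solMod] at hy
      rcases huniq y hy.1 hy.2 with h | h
      · simp [h]
      · rw [h]; exact Submodule.mem_span_singleton_self x0
    · rw [Submodule.span_singleton_le_iff_mem, mem_solMod]
      exact hsol
  have h1 : Module.finrank (ZMod 2) ↥(solMod G A T) = 1 := by
    rw [hk]; exact finrank_span_singleton hx0
  have := colRank_add_finrank G A T
  omega


variable {G}
lemma zmod2_eq_one {z : ZMod 2} (h : z ≠ 0) : z = 1 := by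
  fin_cases z
  · exact absurd rfl h
  · rfl

lemma wt2vec_ne_zero {q : ℕ} (i j : Fin q) : wt2vec i j ≠ 0 := by
  intro h
  have := congrFun h i
  simp [wt2vec] at this

lemma filter_wt2vec {q : ℕ} (i j : Fin q) :
    (Finset.univ.filter fun r => wt2vec i j r ≠ 0) = {i, j} := by
  ext r
  simp only [Finset.mem_filter, Finset.mem_univ, true_and, Finset.mem_insert,
    Finset.mem_singleton, wt2vec]
  by_cases h : r = i ∨ r = j <;> simp [h] <;> tauto

lemma hWeight_wt2vec {q : ℕ} {i j : Fin q} (hij : i ≠ j) : hWeight (wt2vec i j) = 2 := by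
  rw [hWeight, filter_wt2vec]
  rw [Finset.card_insert_of_notMem (by simpa using hij), Finset.card_singleton]

lemma hWeight_wt2vec_self {q : ℕ} (i : Fin q) : hWeight (wt2vec i i) = 1 := by
  rw [hWeight, filter_wt2vec]
  simp

lemma one_le_hWeight {m : ℕ} {x : Fin m → ZMod 2} (h : x ≠ 0) : 1 ≤ hWeight x := by
  rw [hWeight, Nat.one_le_iff_ne_zero, Finset.card_ne_zero]
  obtain ⟨i, hi⟩ := Function.ne_iff.mp h
  exact ⟨i, by simpa using hi⟩

lemma hWeight_le {m : ℕ} (x : Fin m → ZMod 2) : hWeight x ≤ m := by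
  simpa [hWeight] using Finset.card_le_card (Finset.filter_subset _ (Finset.univ : Finset (Fin m)))


lemma vecMul_inj (hrank : G.rank = k) {x : Fin k → ZMod 2}
    (h : Matrix.vecMul x G = 0) : x = 0 := by
  have hker : LinearMap.ker (Matrix.mulVecLin G.transpose) = ⊥ := by
    have h1 := LinearMap.finrank_range_add_finrank_ker (Matrix.mulVecLin G.transpose)
    have h2 : Module.finrank (ZMod 2) (LinearMap.range (Matrix.mulVecLin G.transpose)) = k := by
      have := G.rank_transpose
      rw [Matrix.rank] at this
      rw [this, hrank]
    rw [h2] at h1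
    simp only [Module.finrank_pi, Fintype.card_fin] at h1  -- hopefully finrank (Fin k → ZMod 2) = k
    have : Module.finrank (ZMod 2) ↥(LinearMap.ker (Matrix.mulVecLin G.transpose)) = 0 := by omega
    exact Submodule.finrank_eq_zero.mp this
  have : x ∈ LinearMap.ker (Matrix.mulVecLin G.transpose) := by
    rw [LinearMap.mem_ker, Matrix.mulVecLin_apply, Matrix.mulVec_transpose, h]
  rwa [hker, Submodule.mem_bot] at this

/-- codeword with support in {i,j} is 0 or wt2vec i j -/
lemma codeword_support_pair (hmin : HasMinDistGE2 G) {x : Fin k → ZMod 2} {i j : Fin q}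
    (h : ∀ a : Fin q, a ≠ i → a ≠ j → Matrix.vecMul x G a = 0) :
    Matrix.vecMul x G = 0 ∨ Matrix.vecMul x G = wt2vec i j := by
  by_cases hz : Matrix.vecMul x G = 0
  · exact Or.inl hz
  · right
    have h2 : 2 ≤ hWeight (Matrix.vecMul x G) := hmin x hz
    set c := Matrix.vecMul x G with hc
    have hsub : (Finset.univ.filter fun r => c r ≠ 0) ⊆ {i, j} := by
      intro r hr
      simp only [Finset.mem_filter, Finset.mem_univ, true_and] at hr
      simp only [Finset.mem_insert, Finset.mem_singleton]
      by_contra hcon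
      push_neg at hcon
      exact hr (h r hcon.1 hcon.2)
    have hcard : ({i, j} : Finset (Fin q)).card ≤ 2 := Finset.card_insert_le _ _ |>.trans (by simp)
    have heq : (Finset.univ.filter fun r => c r ≠ 0) = {i, j} := by
      apply Finset.eq_of_subset_of_card_le hsub
      calc ({i,j} : Finset (Fin q)).card ≤ 2 := hcard
        _ ≤ _ := h2
    funext r
    by_cases hr : r = i ∨ r = j
    · have : r ∈ (Finset.univ.filter fun r => c r ≠ 0) := by
        rw [heq]; simpa [Finset.mem_insert, Finset.mem_singleton] using hr
      simp only [Finset.mem_filter] at this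
      rw [zmod2_eq_one this.2]
      simp [wt2vec, hr]
    · push_neg at hr
      rw [h r hr.1 hr.2]
      simp [wt2vec, hr.1, hr.2]


lemma colRank_full {A : Finset (Fin q)} (T : Finset (Fin k)) (hrank : G.rank = k)
    (hA : ∀ a, a ∈ A) : colRank G A T = k := by
  apply colRank_eq_of_unique
  intro x hx _
  exact vecMul_inj hrank (funext fun a => hx a (hA a))

lemma colRank_missing_one {A : Finset (Fin q)} (T : Finset (Fin k)) (hrank : G.rank = k)
    (hmin : HasMinDistGE2 G) {i : Fin q} (hA : ∀ a, a ∉ A → a = i) : colRank G A T = k := by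
  apply colRank_eq_of_unique
  intro x hx _
  have hsupp : ∀ a : Fin q, a ≠ i → a ≠ i → Matrix.vecMul x G a = 0 := by
    intro a ha _
    exact hx a (by by_contra hcon; exact ha (hA a hcon))
  rcases codeword_support_pair hmin hsupp with h | h
  · exact vecMul_inj hrank h
  · exfalso
    have h2 := hmin x (by rw [h]; exact wt2vec_ne_zero i i)
    rw [h, hWeight_wt2vec_self] at h2
    omega

lemma colRank_missing_two {A : Finset (Fin q)} (T : Finset (Fin k)) (hrank : G.rank = k)
    (hmin : HasMinDistGE2 G) {i j : Fin q} (hij : i ≠ j) (hi : i ∉ A) (hj : j ∉ A)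
    (hA : ∀ a, a ∉ A → a = i ∨ a = j) :
    colRank G A T = k - (if ∃ x : Fin k → ZMod 2,
      Matrix.vecMul x G = wt2vec i j ∧ ∀ t ∈ T, x t = 0 then 1 else 0) := by
  have hsupp : ∀ y : Fin k → ZMod 2, (∀ a ∈ A, Matrix.vecMul y G a = 0) →
      Matrix.vecMul y G = 0 ∨ Matrix.vecMul y G = wt2vec i j := by
    intro y hy
    apply codeword_support_pair hmin
    intro a hai haj
    apply hy
    by_contra hcon
    rcases hA a hcon with h | h
    · exact hai h
    · exact haj h
  by_cases hex : ∃ x : Fin k → ZMod 2, Matrix.vecMul x G = wt2vec i j ∧ ∀ t ∈ T, x t = 0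
  · obtain ⟨x0, hx0G, hx0T⟩ := hex
    rw [if_pos ⟨x0, hx0G, hx0T⟩]
    apply colRank_eq_of_one G A T x0
    · intro h0
      rw [h0] at hx0G
      exact wt2vec_ne_zero i j (by rw [← hx0G]; simp [Matrix.vecMul])
    · constructor
      · intro a ha
        rw [hx0G]
        have hai : a ≠ i := fun h => hi (h ▸ ha)
        have haj : a ≠ j := fun h => hj (h ▸ ha)
        simp [wt2vec, hai, haj]
      · exact hx0T
    · intro y hyA hyT
      rcases hsupp y hyA with h | h
      · exact Or.inl (vecMul_inj hrank h)
      · right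
        have : Matrix.vecMul (y + x0) G = 0 := by
          rw [Matrix.add_vecMul, h, hx0G]
          funext r
          simp [CharTwo.add_self_eq_zero]
        have h0 := vecMul_inj hrank this
        funext r
        have := congrFun h0 r
        simp only [Pi.add_apply, Pi.zero_apply] at this
        have : y r = y r + (y r + x0 r) := by rw [this]; ring
        rwa [← add_assoc, CharTwo.add_self_eq_zero, zero_add] at this
  · rw [if_neg hex]
    simp only [Nat.sub_zero]
    apply colRank_eq_of_unique
    intro y hyA hyT
    rcases hsupp y hyA with h | h
    · exact vecMul_inj hrank h
    · exact absurd ⟨y, h, hyT⟩ hex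

end LinAlg

section ETilde
variable {n k q : ℕ} {G : Matrix (Fin k) (Fin q) (ZMod 2)} {τ : Fin q → Fin n}

lemma Tfilter_eq (u : ℕ) :
    ((Finset.univ : Finset (Finset (Fin k))).filter fun T => T.card = u)
      = Finset.powersetCard u Finset.univ := by
  rw [Finset.powersetCard_eq_filter, Finset.powerset_univ]

lemma Tfilter_card (u : ℕ) :
    ((Finset.univ : Finset (Finset (Fin k))).filter fun T => T.card = u).card = k.choose u := by
  rw [Tfilter_eq, Finset.card_powersetCard, Finset.card_univ, Fintype.card_fin]

lemma sum_T_indicator (x : Fin k → ZMod 2) (u : ℕ) :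
    ∑ T ∈ (Finset.univ.filter fun T : Finset (Fin k) => T.card = u),
      (if ∀ t ∈ T, x t = 0 then (1:ℕ) else 0) = (k - hWeight x).choose u := by
  rw [Finset.sum_boole]
  have hZ : ((Finset.univ.filter fun T : Finset (Fin k) => T.card = u).filter
      fun T => ∀ t ∈ T, x t = 0)
      = Finset.powersetCard u (Finset.univ.filter fun t => x t = 0) := by
    ext T
    simp only [Finset.mem_filter, Finset.mem_univ, true_and, Finset.mem_powersetCard,
      Finset.subset_iff]
    tauto
  rw [hZ, Finset.card_powersetCard]
  congr 2
  have := Finset.card_filter_add_card_filter_not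
    (s := (Finset.univ : Finset (Fin k))) (p := fun t => x t = 0)
  rw [Finset.card_univ, Fintype.card_fin] at this
  have hW : (Finset.univ.filter fun t : Fin k => ¬ x t = 0).card = hWeight x := rfl
  omega

lemma fiber_eq_of_card {A : Finset (Fin q)} {l : Fin n}
    (h : (A.filter fun j => τ j = l).card = colCount τ l) :
    A.filter (fun j => τ j = l) = Finset.univ.filter (fun j => τ j = l) :=
  Finset.eq_of_subset_of_card_le (Finset.filter_subset_filter _ (Finset.subset_univ A))
    (le_of_eq h.symm)

lemma card_eq_sum_fibers (A : Finset (Fin q)) :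
    A.card = ∑ l, (A.filter fun j => τ j = l).card :=
  Finset.card_eq_sum_card_fiberwise (fun x _ => Finset.mem_univ (τ x))

lemma sum_colCount : ∑ l, colCount τ l = q := by
  have := card_eq_sum_fibers (τ := τ) Finset.univ
  rw [Finset.card_univ, Fintype.card_fin] at this
  exact this.symm

lemma filterSet_full :
    (Finset.univ.filter fun A : Finset (Fin q) =>
      ∀ l, (A.filter fun j => τ j = l).card = colCount τ l) = {Finset.univ} := by
  ext A
  simp only [Finset.mem_filter, Finset.mem_univ, true_and, Finset.mem_singleton]
  constructor
  · intro h
    apply Finset.eq_univ_iff_forall.mpr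
    intro j
    have := fiber_eq_of_card (h (τ j))
    have hj : j ∈ A.filter (fun i => τ i = τ j) := by
      rw [this]; simp
    exact (Finset.mem_filter.mp hj).1
  · rintro rfl
    intro l; rfl

lemma eTilde_full (hrank : G.rank = k) (u : ℕ) :
    eTilde G τ (colCount τ) u = k.choose u * k := by
  rw [eTilde, filterSet_full, Finset.sum_singleton]
  rw [Finset.sum_congr rfl (fun T _ => colRank_full T hrank (fun a => Finset.mem_univ a))]
  rw [Finset.sum_const, Tfilter_card, smul_eq_mul]

lemma filterSet_one_removed {m : Fin n} (hm : 1 ≤ colCount τ m) :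
    (Finset.univ.filter fun A : Finset (Fin q) =>
        ∀ l, (A.filter fun j => τ j = l).card = colCount τ l - if l = m then 1 else 0)
      = (Finset.univ.filter fun j => τ j = m).image (fun j => Finset.univ.erase j) := by
  ext A
  simp only [Finset.mem_filter, Finset.mem_univ, true_and, Finset.mem_image]
  constructor
  · intro h
    have hssub : A.filter (fun j => τ j = m) ⊂ Finset.univ.filter (fun j => τ j = m) := by
      apply Finset.ssubset_iff_subset_ne.mpr
      refine ⟨Finset.filter_subset_filter _ (Finset.subset_univ A), ?_⟩
      intro heq
      have := h m
      rw [if_pos rfl] at this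
      rw [heq] at this
      change colCount τ m = colCount τ m - 1 at this
      omega
    obtain ⟨j, hjmem, hjnot⟩ := Finset.exists_of_ssubset hssub
    have hjτ : τ j = m := (Finset.mem_filter.mp hjmem).2
    have hjA : j ∉ A := fun hA => hjnot (Finset.mem_filter.mpr ⟨hA, hjτ⟩)
    refine ⟨j, hjτ, ?_⟩
    symm
    apply Finset.eq_of_subset_of_card_le
    · intro a ha
      exact Finset.mem_erase.mpr ⟨fun hc => hjA (hc ▸ ha), Finset.mem_univ a⟩
    · rw [Finset.card_erase_of_mem (Finset.mem_univ j), Finset.card_univ, Fintype.card_fin]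
      rw [card_eq_sum_fibers A, Finset.sum_congr rfl (fun l _ => h l)]
      have h1 : ∑ l, ((colCount τ l - if l = m then 1 else 0) + if l = m then 1 else 0)
          = ∑ l, colCount τ l := by
        apply Finset.sum_congr rfl
        intro l _
        by_cases hl : l = m
        · subst hl; simp; omega
        · simp [hl]
      rw [Finset.sum_add_distrib] at h1
      have h2 : ∑ l, (if l = m then (1:ℕ) else 0) = 1 := by simp
      rw [h2, sum_colCount] at h1
      omega
  · rintro ⟨j, hjτ, rfl⟩
    intro l
    rw [Finset.filter_erase]
    by_cases hl : l = m
    · subst hl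
      rw [Finset.card_erase_of_mem (by simp [hjτ]), if_pos rfl]
      rfl
    · rw [Finset.erase_eq_of_notMem (by simp only [Finset.mem_filter, Finset.mem_univ, true_and, hjτ]; exact fun hc => hl hc.symm)]
      simp [hl]
      rfl

lemma erase_univ_injOn {j j' : Fin q} (h : (Finset.univ : Finset (Fin q)).erase j = Finset.univ.erase j') : j = j' := by
  by_contra hne
  have : j' ∈ Finset.univ.erase j := Finset.mem_erase.mpr ⟨fun hc => hne hc.symm, Finset.mem_univ _⟩
  rw [h] at this
  exact (Finset.mem_erase.mp this).1 rfl

lemma eTilde_one_removed (hrank : G.rank = k) (hmin : HasMinDistGE2 G)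
    {m : Fin n} (hm : 1 ≤ colCount τ m) (u : ℕ) :
    eTilde G τ (fun l => colCount τ l - if l = m then 1 else 0) u
      = colCount τ m * (k.choose u * k) := by
  rw [eTilde, filterSet_one_removed hm]
  rw [Finset.sum_image (fun x _ y _ h => erase_univ_injOn h)]
  have hterm : ∀ j ∈ Finset.univ.filter (fun j => τ j = m),
      ∑ T ∈ Finset.univ.filter (fun T : Finset (Fin k) => T.card = u),
        colRank G (Finset.univ.erase j) T = k.choose u * k := by
    intro j _
    rw [Finset.sum_congr rfl (fun T _ => colRank_missing_one T hrank hmin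
      (i := j) (fun a ha => by simpa using ha))]
    rw [Finset.sum_const, Tfilter_card, smul_eq_mul]
  rw [Finset.sum_congr rfl hterm, Finset.sum_const, smul_eq_mul]
  rfl

end ETilde

section Pairs
variable {n k q : ℕ} (G : Matrix (Fin k) (Fin q) (ZMod 2)) (τ : Fin q → Fin n)

def solvable (i j : Fin q) : Prop :=
  ∃ x : Fin k → ZMod 2, Matrix.vecMul x G = wt2vec i j

def wsol (i j : Fin q) : ℕ :=
  if h : solvable G i j then hWeight h.choose else 0

def pairSet (e m : Fin n) : Finset (Fin q × Fin q) :=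
  Finset.univ.filter fun p : Fin q × Fin q =>
    p.1 ≠ p.2 ∧ τ p.1 = e ∧ τ p.2 = m ∧ solvable G p.1 p.2

variable {G τ}

lemma sol_ne_zero {i j : Fin q} {x : Fin k → ZMod 2}
    (hx : Matrix.vecMul x G = wt2vec i j) : x ≠ 0 := by
  intro h
  subst h
  exact wt2vec_ne_zero i j (by rw [← hx]; simp [Matrix.vecMul])

lemma sol_unique (hrank : G.rank = k) {i j : Fin q} {x y : Fin k → ZMod 2}
    (hx : Matrix.vecMul x G = wt2vec i j) (hy : Matrix.vecMul y G = wt2vec i j) : x = y := by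
  have : Matrix.vecMul (x + y) G = 0 := by
    rw [Matrix.add_vecMul, hx, hy]
    funext r
    simp [CharTwo.add_self_eq_zero]
  have h0 := vecMul_inj hrank this
  funext r
  have hr := congrFun h0 r
  simp only [Pi.add_apply, Pi.zero_apply] at hr
  have : x r = x r + (x r + y r) := by rw [hr]; ring
  rwa [← add_assoc, CharTwo.add_self_eq_zero, zero_add] at this

lemma wsol_eq (hrank : G.rank = k) {i j : Fin q} {x : Fin k → ZMod 2}
    (hx : Matrix.vecMul x G = wt2vec i j) : wsol G i j = hWeight x := by
  have hs : solvable G i j := ⟨x, hx⟩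
  rw [wsol, dif_pos hs]
  rw [sol_unique hrank hs.choose_spec hx]

lemma one_le_wsol (hrank : G.rank = k) {i j : Fin q} (h : solvable G i j) :
    1 ≤ wsol G i j := by
  obtain ⟨x, hx⟩ := h
  rw [wsol_eq hrank hx]
  exact one_le_hWeight (sol_ne_zero hx)

lemma wsol_le (hrank : G.rank = k) {i j : Fin q} : wsol G i j ≤ k := by
  by_cases h : solvable G i j
  · obtain ⟨x, hx⟩ := h
    rw [wsol_eq hrank hx]
    exact hWeight_le x
  · rw [wsol, dif_neg h]
    omega

lemma one_le_k_of_solvable {i j : Fin q} (h : solvable G i j) : 1 ≤ k := by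
  obtain ⟨x, hx⟩ := h
  have := one_le_hWeight (sol_ne_zero hx)
  have := hWeight_le x
  omega

lemma sum_T_loss (hrank : G.rank = k) {i j : Fin q} (u : ℕ) :
    ∑ T ∈ (Finset.univ.filter fun T : Finset (Fin k) => T.card = u),
      (if ∃ x : Fin k → ZMod 2, Matrix.vecMul x G = wt2vec i j ∧ ∀ t ∈ T, x t = 0
        then (1:ℕ) else 0)
      = if solvable G i j then (k - wsol G i j).choose u else 0 := by
  by_cases hs : solvable G i j
  · rw [if_pos hs]
    obtain ⟨x0, hx0⟩ := hs
    have hcong : ∀ T ∈ (Finset.univ.filter fun T : Finset (Fin k) => T.card = u),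
        (if ∃ x : Fin k → ZMod 2, Matrix.vecMul x G = wt2vec i j ∧ ∀ t ∈ T, x t = 0
          then (1:ℕ) else 0) = (if ∀ t ∈ T, x0 t = 0 then (1:ℕ) else 0) := by
      intro T _
      congr 1
      apply propext
      constructor
      · rintro ⟨x, hxG, hxT⟩
        rwa [sol_unique hrank hx0 hxG]
      · intro hT
        exact ⟨x0, hx0, hT⟩
    rw [Finset.sum_congr rfl hcong, sum_T_indicator, wsol_eq hrank hx0]
  · rw [if_neg hs]
    apply Finset.sum_eq_zero
    intro T _
    rw [if_neg]
    rintro ⟨x, hxG, -⟩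
    exact hs ⟨x, hxG⟩

/-- the cast of colRank for a two-missing set, in ℝ -/
lemma colRank_missing_two_real (T : Finset (Fin k)) (hrank : G.rank = k)
    (hmin : HasMinDistGE2 G) {A : Finset (Fin q)} {i j : Fin q} (hij : i ≠ j) (hi : i ∉ A)
    (hj : j ∉ A) (hA : ∀ a, a ∉ A → a = i ∨ a = j) :
    (colRank G A T : ℝ) = (k : ℝ) - (if ∃ x : Fin k → ZMod 2,
      Matrix.vecMul x G = wt2vec i j ∧ ∀ t ∈ T, x t = 0 then (1:ℕ) else 0) := by
  rw [colRank_missing_two T hrank hmin hij hi hj hA]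
  split
  · rename_i h
    obtain ⟨x, hxG, -⟩ := h
    have hk := one_le_k_of_solvable ⟨x, hxG⟩
    rw [Nat.cast_sub hk]
  · simp

lemma sum_T_colRank_missing_two (hrank : G.rank = k) (hmin : HasMinDistGE2 G)
    {A : Finset (Fin q)} {i j : Fin q} (hij : i ≠ j) (hi : i ∉ A) (hj : j ∉ A)
    (hA : ∀ a, a ∉ A → a = i ∨ a = j) (u : ℕ) :
    ∑ T ∈ (Finset.univ.filter fun T : Finset (Fin k) => T.card = u), (colRank G A T : ℝ)
      = (k.choose u * k : ℝ)
        - (if solvable G i j then ((k - wsol G i j).choose u : ℝ) else 0) := by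
  rw [Finset.sum_congr rfl (fun T hT => colRank_missing_two_real T hrank hmin hij hi hj hA)]
  rw [Finset.sum_sub_distrib, Finset.sum_const, Tfilter_card, nsmul_eq_mul]
  congr 1
  rw [← Nat.cast_sum, sum_T_loss hrank]
  split <;> simp

end Pairs

section ETilde2
variable {n k q : ℕ} {G : Matrix (Fin k) (Fin q) (ZMod 2)} {τ : Fin q → Fin n}

lemma not_mem_erase_erase {i j a : Fin q} :
    a ∉ ((Finset.univ : Finset (Fin q)).erase i).erase j ↔ a = j ∨ a = i := by
  simp only [Finset.mem_erase, Finset.mem_univ, and_true, not_and]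
  constructor
  · intro h
    by_cases haj : a = j
    · exact Or.inl haj
    · exact Or.inr (by by_contra hai; exact (h haj) hai)
  · rintro (rfl | rfl) <;> tauto

lemma self_not_mem_erase_erase {i j : Fin q} :
    i ∉ ((Finset.univ : Finset (Fin q)).erase i).erase j :=
  not_mem_erase_erase.mpr (Or.inr rfl)

lemma snd_not_mem_erase_erase {i j : Fin q} :
    j ∉ ((Finset.univ : Finset (Fin q)).erase i).erase j :=
  not_mem_erase_erase.mpr (Or.inl rfl)

lemma erase_erase_comm (i j : Fin q) :
    ((Finset.univ : Finset (Fin q)).erase i).erase j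
      = ((Finset.univ : Finset (Fin q)).erase j).erase i := by
  ext a
  simp only [Finset.mem_erase, Finset.mem_univ, and_true]
  tauto

lemma card_erase_erase {i j : Fin q} (hij : i ≠ j) :
    (((Finset.univ : Finset (Fin q)).erase i).erase j).card = q - 1 - 1 := by
  rw [Finset.card_erase_of_mem (Finset.mem_erase.mpr ⟨Ne.symm hij, Finset.mem_univ j⟩),
    Finset.card_erase_of_mem (Finset.mem_univ i), Finset.card_univ, Fintype.card_fin]

lemma card_filter_erase_erase {i j : Fin q} (hij : i ≠ j) (l : Fin n) :
    ((((Finset.univ : Finset (Fin q)).erase i).erase j).filter fun r => τ r = l).card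
      = colCount τ l - (if τ i = l then 1 else 0) - (if τ j = l then 1 else 0) := by
  rw [Finset.filter_erase, Finset.filter_erase]
  have hcF : ((Finset.univ : Finset (Fin q)).filter fun r => τ r = l).card = colCount τ l := rfl
  by_cases hi : τ i = l <;> by_cases hj : τ j = l
  · have h1 : j ∈ ((Finset.univ : Finset (Fin q)).filter fun r => τ r = l).erase i :=
      Finset.mem_erase.mpr ⟨Ne.symm hij, Finset.mem_filter.mpr ⟨Finset.mem_univ j, hj⟩⟩
    have h2 : i ∈ (Finset.univ : Finset (Fin q)).filter fun r => τ r = l :=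
      Finset.mem_filter.mpr ⟨Finset.mem_univ i, hi⟩
    rw [Finset.card_erase_of_mem h1, Finset.card_erase_of_mem h2, hcF, if_pos hi, if_pos hj]
  · have h1 : j ∉ ((Finset.univ : Finset (Fin q)).filter fun r => τ r = l).erase i :=
      fun h => hj (Finset.mem_filter.mp (Finset.mem_of_mem_erase h)).2
    have h2 : i ∈ (Finset.univ : Finset (Fin q)).filter fun r => τ r = l :=
      Finset.mem_filter.mpr ⟨Finset.mem_univ i, hi⟩
    rw [Finset.erase_eq_of_notMem h1, Finset.card_erase_of_mem h2, hcF, if_pos hi, if_neg hj]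
    omega
  · have h1 : j ∈ ((Finset.univ : Finset (Fin q)).filter fun r => τ r = l).erase i :=
      Finset.mem_erase.mpr ⟨Ne.symm hij, Finset.mem_filter.mpr ⟨Finset.mem_univ j, hj⟩⟩
    have h2 : i ∉ (Finset.univ : Finset (Fin q)).filter fun r => τ r = l :=
      fun h => hi (Finset.mem_filter.mp h).2
    rw [Finset.card_erase_of_mem h1, Finset.erase_eq_of_notMem h2, hcF, if_neg hi, if_pos hj]
    omega
  · have h1 : j ∉ ((Finset.univ : Finset (Fin q)).filter fun r => τ r = l).erase i :=
      fun h => hj (Finset.mem_filter.mp (Finset.mem_of_mem_erase h)).2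
    have h2 : i ∉ (Finset.univ : Finset (Fin q)).filter fun r => τ r = l :=
      fun h => hi (Finset.mem_filter.mp h).2
    rw [Finset.erase_eq_of_notMem h1, Finset.erase_eq_of_notMem h2, hcF, if_neg hi, if_neg hj]
    omega

lemma exists_missing {A : Finset (Fin q)} {l : Fin n} {c : ℕ}
    (h : (A.filter fun r => τ r = l).card = c) (hc : c < colCount τ l) :
    ∃ i, τ i = l ∧ i ∉ A := by
  have hssub : A.filter (fun r => τ r = l) ⊂ Finset.univ.filter (fun r => τ r = l) := by
    apply Finset.ssubset_iff_subset_ne.mpr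
    refine ⟨Finset.filter_subset_filter _ (Finset.subset_univ A), ?_⟩
    intro heq
    rw [heq] at h
    change colCount τ l = c at h
    omega
  obtain ⟨i, himem, hinot⟩ := Finset.exists_of_ssubset hssub
  have hiτ : τ i = l := (Finset.mem_filter.mp himem).2
  exact ⟨i, hiτ, fun hA => hinot (Finset.mem_filter.mpr ⟨hA, hiτ⟩)⟩

lemma card_A_of_two_removed {A : Finset (Fin q)} {e m : Fin n}
    (he : 1 ≤ colCount τ e) (hm2 : (if m = e then 2 else 1) ≤ colCount τ m)
    (h : ∀ l, (A.filter fun r => τ r = l).card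
      = colCount τ l - (if l = m then 1 else 0) - (if l = e then 1 else 0)) :
    A.card = q - 2 := by
  rw [card_eq_sum_fibers A, Finset.sum_congr rfl (fun l _ => h l)]
  have h1 : ∑ l, ((colCount τ l - (if l = m then 1 else 0) - (if l = e then 1 else 0))
      + ((if l = m then 1 else 0) + (if l = e then 1 else 0)))
      = ∑ l, colCount τ l := by
    apply Finset.sum_congr rfl
    intro l _
    have hbound : (if l = m then 1 else 0) + (if l = e then 1 else 0) ≤ colCount τ l := by
      rcases eq_or_ne l m with rfl | hlm
      · rcases eq_or_ne l e with rfl | hlne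
        · simpa using hm2
        · simpa [hlne] using hm2
      · rcases eq_or_ne l e with rfl | hlne
        · simp only [if_neg hlm]
          simpa using he
        · simp [hlm, hlne]
    omega
  rw [Finset.sum_add_distrib, Finset.sum_add_distrib] at h1
  have h2 : ∑ l, (if l = m then (1:ℕ) else 0) = 1 := by simp
  have h3 : ∑ l, (if l = e then (1:ℕ) else 0) = 1 := by simp
  rw [h2, h3, sum_colCount] at h1
  have hsumq := sum_colCount (τ := τ)
  have hcm : colCount τ m ≤ ∑ l, colCount τ l :=
    Finset.single_le_sum (fun l _ => Nat.zero_le _) (Finset.mem_univ m)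
  have hq : 2 ≤ q := by
    by_cases hme : m = e
    · have h4 : 2 ≤ colCount τ m := by simpa [hme] using hm2
      omega
    · have hs : colCount τ m + colCount τ e ≤ ∑ l, colCount τ l := by
        rw [← Finset.sum_pair hme]
        exact Finset.sum_le_sum_of_subset (fun x _ => Finset.mem_univ x)
      have h4 : 1 ≤ colCount τ m := by simpa [hme] using hm2
      omega
  omega

lemma filterSet_two_removed {e m : Fin n} (hem : m ≠ e)
    (he : 1 ≤ colCount τ e) (hm : 1 ≤ colCount τ m) :
    (Finset.univ.filter fun A : Finset (Fin q) =>
        ∀ l, (A.filter fun j => τ j = l).card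
          = colCount τ l - (if l = m then 1 else 0) - (if l = e then 1 else 0))
      = ((Finset.univ.filter fun p : Fin q × Fin q => τ p.1 = e ∧ τ p.2 = m).image
          fun p => (Finset.univ.erase p.1).erase p.2) := by
  ext A
  simp only [Finset.mem_filter, Finset.mem_univ, true_and, Finset.mem_image, Prod.exists]
  constructor
  · intro h
    have hce : (A.filter fun r => τ r = e).card = colCount τ e - 1 := by
      have := h e
      rw [if_neg (Ne.symm hem), if_pos rfl] at this
      omega
    have hcm : (A.filter fun r => τ r = m).card = colCount τ m - 1 := by
      have := h m
      rw [if_pos rfl, if_neg hem] at this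
      omega
    obtain ⟨i, hiτ, hiA⟩ := exists_missing hce (by omega)
    obtain ⟨j, hjτ, hjA⟩ := exists_missing hcm (by omega)
    have hij : i ≠ j := fun hc => hem (by rw [← hjτ, ← hc, hiτ])
    refine ⟨i, j, ⟨hiτ, hjτ⟩, ?_⟩
    symm
    apply Finset.eq_of_subset_of_card_le
    · intro a ha
      refine Finset.mem_erase.mpr ⟨fun hc => hjA (hc ▸ ha),
        Finset.mem_erase.mpr ⟨fun hc => hiA (hc ▸ ha), Finset.mem_univ a⟩⟩
    · rw [card_erase_erase hij,
        card_A_of_two_removed he (by rwa [if_neg hem]) h]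
      omega
  · rintro ⟨i, j, ⟨hiτ, hjτ⟩, rfl⟩
    have hij : i ≠ j := fun hc => hem (by rw [← hjτ, ← hc, hiτ])
    intro l
    rw [card_filter_erase_erase hij l, hiτ, hjτ]
    by_cases hl : l = m <;> by_cases hl' : l = e
    · exact absurd (hl.symm.trans hl') hem
    · rw [if_neg (fun hc => hl' hc.symm), if_pos hl.symm, if_pos hl, if_neg hl']
      omega
    · rw [if_pos hl'.symm, if_neg (fun hc => hl hc.symm), if_neg hl, if_pos hl']
      omega
    · rw [if_neg (fun hc => hl' hc.symm), if_neg (fun hc => hl hc.symm), if_neg hl, if_neg hl']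

lemma eTilde_two_removed (hrank : G.rank = k) (hmin : HasMinDistGE2 G) {e m : Fin n}
    (hem : m ≠ e) (he : 1 ≤ colCount τ e) (hm : 1 ≤ colCount τ m) (u : ℕ) :
    (eTilde G τ (fun l => colCount τ l - (if l = m then 1 else 0) - (if l = e then 1 else 0)) u : ℝ)
      = (colCount τ e : ℝ) * colCount τ m * (k.choose u * k)
        - ∑ p ∈ pairSet G τ e m, ((k - wsol G p.1 p.2).choose u : ℝ) := by
  rw [eTilde, filterSet_two_removed hem he hm]
  push_cast
  rw [Finset.sum_image]
  swap
  · rintro ⟨i, j⟩ hp ⟨i', j'⟩ hp' heq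
    simp only [Finset.mem_coe, Finset.mem_filter, Finset.mem_univ, true_and] at hp hp' heq
    have hi'm : i' ∉ (Finset.univ.erase i).erase j := by
      rw [heq]; exact self_not_mem_erase_erase
    have hj'm : j' ∉ (Finset.univ.erase i).erase j := by
      rw [heq]; exact snd_not_mem_erase_erase
    have hi' : i' = i := by
      rcases not_mem_erase_erase.mp hi'm with h | h
      · rw [h] at hp'
        exact absurd (hp.2.symm.trans hp'.1) hem
      · exact h
    have hj' : j' = j := by
      rcases not_mem_erase_erase.mp hj'm with h | h
      · exact h
      · rw [h] at hp'
        exact absurd (hp'.2.symm.trans hp.1) hem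
    rw [hi', hj']
  · have hterm : ∀ p ∈ (Finset.univ.filter fun p : Fin q × Fin q => τ p.1 = e ∧ τ p.2 = m),
        ∑ T ∈ Finset.univ.filter (fun T : Finset (Fin k) => T.card = u),
          (colRank G ((Finset.univ.erase p.1).erase p.2) T : ℝ)
        = (k.choose u * k : ℝ)
          - (if solvable G p.1 p.2 then ((k - wsol G p.1 p.2).choose u : ℝ) else 0) := by
      intro p hp
      simp only [Finset.mem_filter, Finset.mem_univ, true_and] at hp
      have hij : p.1 ≠ p.2 := fun hc => hem (by rw [← hp.2, ← hc, hp.1])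
      exact sum_T_colRank_missing_two hrank hmin hij self_not_mem_erase_erase
        snd_not_mem_erase_erase (fun a ha => (not_mem_erase_erase.mp ha).symm) u
    rw [Finset.sum_congr rfl hterm, Finset.sum_sub_distrib, Finset.sum_const, nsmul_eq_mul]
    congr 1
    · have hcard : (Finset.univ.filter fun p : Fin q × Fin q => τ p.1 = e ∧ τ p.2 = m).card
          = colCount τ e * colCount τ m := by
        rw [← Finset.univ_product_univ,
          Finset.filter_product (fun a => τ a = e) (fun a => τ a = m), Finset.card_product]
        rfl
      rw [hcard]
      push_cast
      ring
    · rw [← Finset.sum_filter]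
      congr 1
      ext p
      simp only [pairSet, Finset.mem_filter, Finset.mem_univ, true_and]
      constructor
      · rintro ⟨⟨h1, h2⟩, h3⟩
        exact ⟨fun hc => hem (by rw [← h2, ← hc, h1]), h1, h2, h3⟩
      · rintro ⟨h0, h1, h2, h3⟩
        exact ⟨⟨h1, h2⟩, h3⟩

lemma filterSet_two_removed_same {e : Fin n} (he : 2 ≤ colCount τ e) :
    (Finset.univ.filter fun A : Finset (Fin q) =>
        ∀ l, (A.filter fun j => τ j = l).card
          = colCount τ l - (if l = e then 1 else 0) - (if l = e then 1 else 0))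
      = ((Finset.univ.filter fun p : Fin q × Fin q =>
            p.1 ≠ p.2 ∧ τ p.1 = e ∧ τ p.2 = e).image
          fun p => (Finset.univ.erase p.1).erase p.2) := by
  ext A
  simp only [Finset.mem_filter, Finset.mem_univ, true_and, Finset.mem_image, Prod.exists]
  constructor
  · intro h
    have hce : (A.filter fun r => τ r = e).card = colCount τ e - 2 := by
      have := h e
      rw [if_pos rfl] at this
      omega
    have hsub : A.filter (fun r => τ r = e) ⊆ Finset.univ.filter (fun r => τ r = e) :=
      Finset.filter_subset_filter _ (Finset.subset_univ A)
    have hcard2 : 1 < ((Finset.univ.filter fun r => τ r = e)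
        \ (A.filter fun r => τ r = e)).card := by
      rw [Finset.card_sdiff_of_subset hsub, hce]
      change 1 < colCount τ e - (colCount τ e - 2)
      omega
    obtain ⟨i, hi, j, hj, hij⟩ := Finset.one_lt_card.mp hcard2
    rw [Finset.mem_sdiff, Finset.mem_filter] at hi hj
    have hiτ : τ i = e := hi.1.2
    have hjτ : τ j = e := hj.1.2
    have hiA : i ∉ A := fun hA => hi.2 (Finset.mem_filter.mpr ⟨hA, hiτ⟩)
    have hjA : j ∉ A := fun hA => hj.2 (Finset.mem_filter.mpr ⟨hA, hjτ⟩)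
    refine ⟨i, j, ⟨hij, hiτ, hjτ⟩, ?_⟩
    symm
    apply Finset.eq_of_subset_of_card_le
    · intro a ha
      refine Finset.mem_erase.mpr ⟨fun hc => hjA (hc ▸ ha),
        Finset.mem_erase.mpr ⟨fun hc => hiA (hc ▸ ha), Finset.mem_univ a⟩⟩
    · rw [card_erase_erase hij,
        card_A_of_two_removed (m := e) (by omega) (by simpa using he) h]
      omega
  · rintro ⟨i, j, ⟨hij, hiτ, hjτ⟩, rfl⟩
    intro l
    rw [card_filter_erase_erase hij l, hiτ, hjτ]
    by_cases hl : l = e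
    · simp [hl]
    · simp [hl, show ¬ e = l from fun hc => hl hc.symm]

lemma sum_comp_card_two {α β : Type*} [DecidableEq β] (s : Finset α) (g : α → β) (f : β → ℝ)
    (hcard : ∀ b ∈ s.image g, (s.filter fun a => g a = b).card = 2) :
    ∑ a ∈ s, f (g a) = 2 * ∑ b ∈ s.image g, f b := by
  rw [Finset.sum_comp, Finset.mul_sum]
  apply Finset.sum_congr rfl
  intro b hb
  rw [hcard b hb]
  rw [nsmul_eq_mul]
  norm_num

lemma fiber_card_two {e : Fin n} {i j : Fin q} (hij : i ≠ j) (hiτ : τ i = e) (hjτ : τ j = e) :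
    ((Finset.univ.filter fun p : Fin q × Fin q => p.1 ≠ p.2 ∧ τ p.1 = e ∧ τ p.2 = e).filter
      fun p => ((Finset.univ.erase p.1).erase p.2) = (Finset.univ.erase i).erase j)
      = {(i, j), (j, i)} := by
  ext ⟨a, b⟩
  simp only [Finset.mem_filter, Finset.mem_univ, true_and, Finset.mem_insert,
    Finset.mem_singleton, Prod.mk.injEq]
  constructor
  · rintro ⟨⟨hab, haτ, hbτ⟩, heq⟩
    have ha : a ∉ (Finset.univ.erase i).erase j := by
      rw [← heq]; exact self_not_mem_erase_erase
    have hb : b ∉ (Finset.univ.erase i).erase j := by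
      rw [← heq]; exact snd_not_mem_erase_erase
    rcases not_mem_erase_erase.mp ha with h1 | h1 <;> rcases not_mem_erase_erase.mp hb with h2 | h2
    · exact absurd (h1.trans h2.symm) hab
    · right; exact ⟨h1, h2⟩
    · left; exact ⟨h1, h2⟩
    · exact absurd (h1.trans h2.symm) hab
  · rintro (⟨rfl, rfl⟩ | ⟨rfl, rfl⟩)
    · exact ⟨⟨hij, hiτ, hjτ⟩, rfl⟩
    · exact ⟨⟨Ne.symm hij, hjτ, hiτ⟩, erase_erase_comm a b⟩

lemma eTilde_two_removed_same (hrank : G.rank = k) (hmin : HasMinDistGE2 G) {e : Fin n}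
    (he : 2 ≤ colCount τ e) (u : ℕ) :
    2 * (eTilde G τ
        (fun l => colCount τ l - (if l = e then 1 else 0) - (if l = e then 1 else 0)) u : ℝ)
      = (colCount τ e : ℝ) * ((colCount τ e : ℝ) - 1) * (k.choose u * k)
        - ∑ p ∈ pairSet G τ e e, ((k - wsol G p.1 p.2).choose u : ℝ) := by
  classical
  set s := Finset.univ.filter (fun p : Fin q × Fin q => p.1 ≠ p.2 ∧ τ p.1 = e ∧ τ p.2 = e)
    with hs
  set F : Finset (Fin q) → ℝ := fun A =>
    ∑ T ∈ Finset.univ.filter (fun T : Finset (Fin k) => T.card = u), (colRank G A T : ℝ)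
    with hF
  have hcard2 : ∀ A ∈ s.image (fun p => (Finset.univ.erase p.1).erase p.2),
      (s.filter (fun p => (Finset.univ.erase p.1).erase p.2 = A)).card = 2 := by
    intro A hA
    obtain ⟨p, hp, rfl⟩ := Finset.mem_image.mp hA
    rw [hs] at hp
    simp only [Finset.mem_filter, Finset.mem_univ, true_and] at hp
    obtain ⟨hij, hiτ, hjτ⟩ := hp
    rw [hs, fiber_card_two hij hiτ hjτ]
    rw [Finset.card_insert_of_notMem (by
      simp only [Finset.mem_singleton, Prod.mk.injEq]
      exact fun h => hij h.1), Finset.card_singleton]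
  have himage : s.image (fun p => (Finset.univ.erase p.1).erase p.2)
      = (Finset.univ.filter fun A : Finset (Fin q) =>
        ∀ l, (A.filter fun j => τ j = l).card
          = colCount τ l - (if l = e then 1 else 0) - (if l = e then 1 else 0)) :=
    (filterSet_two_removed_same he).symm
  have hsum2 : ∑ p ∈ s, F ((Finset.univ.erase p.1).erase p.2)
      = 2 * (eTilde G τ
        (fun l => colCount τ l - (if l = e then 1 else 0) - (if l = e then 1 else 0)) u : ℝ) := by
    rw [sum_comp_card_two s (fun p => (Finset.univ.erase p.1).erase p.2) F hcard2, himage]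
    congr 1
    rw [eTilde]
    push_cast
    rfl
  rw [← hsum2]
  have hterm : ∀ p ∈ s, F ((Finset.univ.erase p.1).erase p.2)
      = (k.choose u * k : ℝ)
        - (if solvable G p.1 p.2 then ((k - wsol G p.1 p.2).choose u : ℝ) else 0) := by
    intro p hp
    rw [hs] at hp
    simp only [Finset.mem_filter, Finset.mem_univ, true_and] at hp
    exact sum_T_colRank_missing_two hrank hmin hp.1 self_not_mem_erase_erase
      snd_not_mem_erase_erase (fun a ha => (not_mem_erase_erase.mp ha).symm) u
  rw [Finset.sum_congr rfl hterm, Finset.sum_sub_distrib, Finset.sum_const, nsmul_eq_mul]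
  congr 1
  · have hcards : s.card = colCount τ e * colCount τ e - colCount τ e := by
      have hsplit := Finset.card_filter_add_card_filter_not
        (s := Finset.univ.filter fun p : Fin q × Fin q => τ p.1 = e ∧ τ p.2 = e)
        (p := fun p => p.1 = p.2)
      have ht : (Finset.univ.filter fun p : Fin q × Fin q => τ p.1 = e ∧ τ p.2 = e).card
          = colCount τ e * colCount τ e := by
        rw [← Finset.univ_product_univ,
          Finset.filter_product (fun a => τ a = e) (fun a => τ a = e), Finset.card_product]
        rfl
      have hdiag : ((Finset.univ.filter fun p : Fin q × Fin q =>
          τ p.1 = e ∧ τ p.2 = e).filter fun p => p.1 = p.2).card = colCount τ e := by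
        have : ((Finset.univ.filter fun p : Fin q × Fin q =>
            τ p.1 = e ∧ τ p.2 = e).filter fun p => p.1 = p.2)
            = (Finset.univ.filter fun r : Fin q => τ r = e).image (fun r => (r, r)) := by
          ext ⟨a, b⟩
          simp only [Finset.mem_filter, Finset.mem_univ, true_and, Finset.mem_image,
            Prod.mk.injEq]
          constructor
          · rintro ⟨⟨h1, h2⟩, h3⟩
            exact ⟨a, h1, rfl, h3⟩
          · rintro ⟨r, hr, rfl, rfl⟩
            exact ⟨⟨hr, hr⟩, rfl⟩
        rw [this, Finset.card_image_of_injective _ (fun a b hab => (Prod.mk.injEq _ _ _ _ ▸ hab :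
          a = b ∧ a = b).1)]
        rfl
      have hss : s = ((Finset.univ.filter fun p : Fin q × Fin q =>
          τ p.1 = e ∧ τ p.2 = e).filter fun p => ¬ p.1 = p.2) := by
        rw [hs, Finset.filter_filter]
        congr 1
        ext p
        tauto
      rw [hss]
      omega
    rw [hcards]
    have h1 : colCount τ e ≤ colCount τ e * colCount τ e :=
      Nat.le_mul_of_pos_left _ (by omega)
    push_cast [Nat.cast_sub h1]
    ring
  · rw [← Finset.sum_filter]
    congr 1
    rw [hs, Finset.filter_filter, pairSet]
    congr 1
    ext p
    tauto


end ETilde2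

section Chi
variable {n k q : ℕ} {G : Matrix (Fin k) (Fin q) (ZMod 2)} {τ : Fin q → Fin n}

lemma chi2_eq_card (hrank : G.rank = k) (u : ℕ) (l m : Fin n) :
    chi2 G τ u l m = ((pairSet G τ l m).filter fun p => wsol G p.1 p.2 = u).card := by
  rw [chi2, pairSet, Finset.filter_filter]
  congr 1
  ext p
  simp only [Finset.mem_filter, Finset.mem_univ, true_and]
  constructor
  · rintro ⟨h1, h2, h3, x, hw, hx⟩
    exact ⟨⟨h1, h2, h3, ⟨x, hx⟩⟩, by rw [wsol_eq hrank hx, hw]⟩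
  · rintro ⟨⟨h1, h2, h3, hsol⟩, hw⟩
    exact ⟨h1, h2, h3, hsol.choose, by rw [← hw, wsol_eq hrank hsol.choose_spec], hsol.choose_spec⟩

lemma sum_chi2 (hrank : G.rank = k) (l m : Fin n) (ε : ℝ) :
    ∑ u ∈ Finset.Icc 1 k, (chi2 G τ u l m : ℝ) * ε ^ u
      = ∑ p ∈ pairSet G τ l m, ε ^ (wsol G p.1 p.2) := by
  have hmaps : ∀ p ∈ pairSet G τ l m, wsol G p.1 p.2 ∈ Finset.Icc 1 k := by
    intro p hp
    simp only [pairSet, Finset.mem_filter, Finset.mem_univ, true_and] at hp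
    exact Finset.mem_Icc.mpr ⟨one_le_wsol hrank hp.2.2.2, wsol_le hrank⟩
  rw [← Finset.sum_fiberwise_of_maps_to hmaps (fun p => ε ^ (wsol G p.1 p.2))]
  apply Finset.sum_congr rfl
  intro u _
  rw [chi2_eq_card hrank]
  have hcong : ∀ p ∈ (pairSet G τ l m).filter (fun p => wsol G p.1 p.2 = u),
      ε ^ (wsol G p.1 p.2) = ε ^ u := fun p hp => by rw [(Finset.mem_filter.mp hp).2]
  rw [Finset.sum_congr rfl hcong, Finset.sum_const, nsmul_eq_mul]

lemma pairSet_empty_of_not_eq2 (hmin : HasMinDistGE2 G) (hne : ¬ HasMinDistEq2 G)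
    (l m : Fin n) : pairSet G τ l m = ∅ := by
  rw [Finset.eq_empty_iff_forall_notMem]
  intro p hp
  simp only [pairSet, Finset.mem_filter, Finset.mem_univ, true_and] at hp
  obtain ⟨hne12, -, -, x, hx⟩ := hp
  exact hne ⟨hmin, x, by rw [hx, hWeight_wt2vec hne12]⟩

lemma binom_sum (ε : ℝ) {w k : ℕ} (hw : w ≤ k) :
    ∑ z ∈ Finset.range (k+1), ε ^ z * (1 - ε) ^ (k - z) * ((k - w).choose (k - z) : ℝ)
      = ε ^ w := by
  rw [← Finset.sum_range_reflect]
  have h1 : ∀ j ∈ Finset.range (k+1),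
      ε ^ (k + 1 - 1 - j) * (1 - ε) ^ (k - (k + 1 - 1 - j)) * ((k - w).choose (k - (k + 1 - 1 - j)) : ℝ)
        = ε ^ (k - j) * (1 - ε) ^ j * ((k - w).choose j : ℝ) := by
    intro j hj
    have hjk : j ≤ k := by
      rw [Finset.mem_range] at hj
      omega
    have e1 : k + 1 - 1 - j = k - j := by omega
    have e2 : k - (k - j) = j := by omega
    rw [e1, e2]
  rw [Finset.sum_congr rfl h1]
  have h2 : ∑ j ∈ Finset.range (k - w + 1), ε ^ (k - j) * (1 - ε) ^ j * ((k - w).choose j : ℝ)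
      = ∑ j ∈ Finset.range (k + 1), ε ^ (k - j) * (1 - ε) ^ j * ((k - w).choose j : ℝ) := by
    apply Finset.sum_subset
    · intro x hx
      rw [Finset.mem_range] at hx ⊢
      omega
    · intro x _ hx
      rw [Finset.mem_range] at hx
      rw [Nat.choose_eq_zero_of_lt (by omega)]
      simp
  rw [← h2]
  have h3 : ∀ j ∈ Finset.range (k - w + 1),
      ε ^ (k - j) * (1 - ε) ^ j * ((k - w).choose j : ℝ)
        = ε ^ w * ((1 - ε) ^ j * ε ^ (k - w - j) * ((k - w).choose j : ℝ)) := by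
    intro j hj
    rw [Finset.mem_range] at hj
    have : k - j = w + (k - w - j) := by omega
    rw [this, pow_add]
    ring
  rw [Finset.sum_congr rfl h3, ← Finset.mul_sum, ← add_pow (1 - ε) ε (k - w)]
  norm_num

end Chi

section Calc
variable {n : ℕ}

lemma hasDerivAt_base (a b : ℕ) :
    HasDerivAt (fun x : ℝ => (1 - x) ^ a * x ^ b)
      ((b : ℝ) * (if a = 0 then 1 else 0) - (if a = 1 then 1 else 0)) 1 := by
  have h1 : HasDerivAt (fun x : ℝ => (1 - x)) (-1) 1 := by
    simpa using (hasDerivAt_id (1:ℝ)).const_sub 1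
  have h2 := (h1.fun_pow a).fun_mul (hasDerivAt_pow b (1:ℝ))
  refine h2.congr_deriv ?_
  rcases a with _ | _ | a <;> simp <;> ring

lemma prod_update_eq (t E : Fin n → ℕ) (m : Fin n) (x : ℝ) :
    (∏ l, (1 - Function.update (fun _ => (1:ℝ)) m x l) ^ t l
        * (Function.update (fun _ => (1:ℝ)) m x l) ^ E l)
      = (∏ l ∈ Finset.univ.erase m, (0:ℝ) ^ t l) * ((1 - x) ^ t m * x ^ E m) := by
  rw [← Finset.mul_prod_erase Finset.univ _ (Finset.mem_univ m)]
  rw [Function.update_self]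
  rw [mul_comm]
  congr 1
  apply Finset.prod_congr rfl
  intro l hl
  rw [Function.update_of_ne (Finset.ne_of_mem_erase hl)]
  norm_num

lemma prod_zero_pow (t : Fin n → ℕ) (m : Fin n) :
    (∏ l ∈ Finset.univ.erase m, (0:ℝ) ^ t l)
      = if ∀ l, l ≠ m → t l = 0 then 1 else 0 := by
  split
  · rename_i h
    apply Finset.prod_eq_one
    intro l hl
    rw [h l (Finset.ne_of_mem_erase hl), pow_zero]
  · rename_i h
    push_neg at h
    obtain ⟨l, hlm, hlt⟩ := h
    exact Finset.prod_eq_zero (Finset.mem_erase.mpr ⟨hlm, Finset.mem_univ l⟩) (zero_pow hlt)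

end Calc

section Main
variable {n k q : ℕ} {G : Matrix (Fin k) (Fin q) (ZMod 2)} {τ : Fin q → Fin n}

/-- the derivative coefficient of the `t`-term -/
def dCoef (τ : Fin q → Fin n) (e m : Fin n) (t : Fin n → ℕ) : ℝ :=
  (if ∀ l', l' ≠ m → t l' = 0 then (1:ℝ) else 0)
    * (((colCount τ m - t m - (if m = e then 1 else 0) : ℕ) : ℝ)
        * (if t m = 0 then (1:ℝ) else 0) - (if t m = 1 then 1 else 0))

lemma hasDerivAt_IEV (e m : Fin n) (ε : ℝ) :
    HasDerivAt (fun x : ℝ => IEV G τ e (Function.update (fun _ => (1:ℝ)) m x) ε)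
      (-((1 / (colCount τ e : ℝ)) *
        ∑ z ∈ Finset.range (k + 1), ε ^ z * (1 - ε) ^ (k - z) *
          ∑ t ∈ tRange (colCount τ) e, dCoef τ e m t * aVN G τ e t z)) 1 := by
  simp only [IEV]
  apply HasDerivAt.const_sub
  apply HasDerivAt.const_mul
  apply HasDerivAt.fun_sum
  intro z _
  apply HasDerivAt.const_mul
  apply HasDerivAt.fun_sum
  intro t _
  apply HasDerivAt.mul_const
  have heq : (fun x : ℝ => ∏ l, (1 - Function.update (fun _ => (1:ℝ)) m x l) ^ t l
        * (Function.update (fun _ => (1:ℝ)) m x l)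
          ^ (colCount τ l - t l - (if l = e then 1 else 0)))
      = fun x : ℝ => (∏ l' ∈ Finset.univ.erase m, (0:ℝ) ^ t l')
          * ((1 - x) ^ t m
            * x ^ (colCount τ m - t m - (if m = e then 1 else 0))) :=
    funext fun x => prod_update_eq t (fun l => colCount τ l - t l - (if l = e then 1 else 0)) m x
  rw [heq, prod_zero_pow]
  exact (hasDerivAt_base (t m) (colCount τ m - t m - (if m = e then 1 else 0))).const_mul _

lemma inner_sum_value (hrank : G.rank = k) (hmin : HasMinDistGE2 G) {e m : Fin n}
    (he : 1 ≤ colCount τ e) (z : ℕ) :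
    ∑ t ∈ tRange (colCount τ) e, dCoef τ e m t * aVN G τ e t z
      = - ∑ p ∈ pairSet G τ e m, ((k - wsol G p.1 p.2).choose (k - z) : ℝ) := by
  by_cases hdeg : colCount τ m ≤ (if m = e then 1 else 0)
  · -- degenerate case: everything vanishes
    have hL : ∑ t ∈ tRange (colCount τ) e, dCoef τ e m t * aVN G τ e t z = 0 := by
      apply Finset.sum_eq_zero
      intro t ht
      have htm : t m = 0 := by
        have := (Fintype.mem_piFinset.mp ht) m
        rw [Finset.mem_range] at this
        by_cases hme : m = e
        · rw [if_pos hme] at this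
          rw [if_pos hme] at hdeg
          omega
        · rw [if_neg hme] at this
          rw [if_neg hme] at hdeg
          omega
      have hcc : colCount τ m - 0 - (if m = e then 1 else 0) = 0 := by
        by_cases hme : m = e <;> simp [hme] at hdeg ⊢ <;> omega
      rw [dCoef, htm, hcc]
      norm_num
    have hR : pairSet G τ e m = ∅ := by
      rw [Finset.eq_empty_iff_forall_notMem]
      intro p hp
      simp only [pairSet, Finset.mem_filter, Finset.mem_univ, true_and] at hp
      obtain ⟨hne, h1, h2, -⟩ := hp
      by_cases hme : m = e
      · rw [if_pos hme] at hdeg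
        subst hme
        have : 1 < colCount τ m := Finset.one_lt_card.mpr
          ⟨p.1, Finset.mem_filter.mpr ⟨Finset.mem_univ _, h1⟩,
           p.2, Finset.mem_filter.mpr ⟨Finset.mem_univ _, h2⟩, hne⟩
        omega
      · rw [if_neg hme] at hdeg
        have : 0 < colCount τ m := Finset.card_pos.mpr
          ⟨p.2, Finset.mem_filter.mpr ⟨Finset.mem_univ _, h2⟩⟩
        omega
    rw [hL, hR]
    simp
  · push_neg at hdeg
    set t0 : Fin n → ℕ := fun _ => 0 with ht0
    set t1 : Fin n → ℕ := fun l' => if l' = m then 1 else 0 with ht1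
    have hmem0 : t0 ∈ tRange (colCount τ) e := by
      rw [tRange, Fintype.mem_piFinset]
      intro a
      rw [Finset.mem_range]
      simp only [ht0]
      rcases eq_or_ne a e with rfl | hae
      · rw [if_pos rfl]
        omega
      · rw [if_neg hae]
        omega
    have hmem1 : t1 ∈ tRange (colCount τ) e := by
      rw [tRange, Fintype.mem_piFinset]
      intro a
      rw [Finset.mem_range]
      simp only [ht1]
      rcases eq_or_ne a m with rfl | ham
      · rcases eq_or_ne a e with rfl | hae
        · rw [if_pos rfl, if_pos rfl]
          rw [if_pos rfl] at hdeg
          omega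
        · rw [if_pos rfl, if_neg hae]
          rw [if_neg hae] at hdeg
          omega
      · rcases eq_or_ne a e with rfl | hae
        · rw [if_neg ham, if_pos rfl]
          omega
        · rw [if_neg ham, if_neg hae]
          omega
    have hne01 : t0 ≠ t1 := by
      intro h
      have := congrFun h m
      simp only [ht0, ht1, if_pos rfl] at this
      exact absurd this (by omega)
    rw [Finset.sum_eq_add_of_mem t0 t1 hmem0 hmem1 hne01 ?vanish]
    case vanish =>
      intro c hc hcne
      by_cases hall : ∀ l', l' ≠ m → c l' = 0
      · have hcm0 : c m ≠ 0 := by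
          intro h0
          apply hcne.1
          funext l'
          simp only [ht0]
          by_cases hl' : l' = m
          · rw [hl']; exact h0
          · exact hall l' hl'
        have hcm1 : c m ≠ 1 := by
          intro h1
          apply hcne.2
          funext l'
          simp only [ht1]
          by_cases hl' : l' = m
          · rw [if_pos hl', hl']; exact h1
          · rw [if_neg hl']; exact hall l' hl'
        rw [dCoef, if_pos hall, if_neg hcm0, if_neg hcm1]
        norm_num
      · rw [dCoef, if_neg hall]
        norm_num
    have ha0 : aVN G τ e t0 z = 0 := by
      rw [aVN]
      simp only [ht0, Nat.sub_zero]
      rw [show (fun l => colCount τ l) = colCount τ from rfl]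
      rw [eTilde_full hrank, eTilde_one_removed hrank hmin he]
      push_cast
      ring
    have hd1 : dCoef τ e m t1 = -1 := by
      rw [dCoef]
      simp only [ht1, if_pos rfl]
      rw [if_pos (fun l' (hl' : l' ≠ m) => by rw [if_neg hl'])]
      norm_num
    have ha1 : aVN G τ e t1 z
        = ∑ p ∈ pairSet G τ e m, ((k - wsol G p.1 p.2).choose (k - z) : ℝ) := by
      rw [aVN]
      rcases eq_or_ne m e with rfl | hme
      · rw [if_pos rfl] at hdeg
        simp only [ht1, if_pos rfl]
        rw [eTilde_one_removed hrank hmin (by omega)]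
        have h2 := eTilde_two_removed_same hrank hmin (by omega : 2 ≤ colCount τ m) (k - z)
        push_cast [Nat.cast_sub (show 1 ≤ colCount τ m by omega)] at h2 ⊢
        linear_combination -h2
      · rw [if_neg hme] at hdeg
        simp only [ht1, if_neg (fun h : e = m => hme h.symm), Nat.sub_zero]
        rw [eTilde_one_removed hrank hmin (by omega : 1 ≤ colCount τ m)]
        have h2 := eTilde_two_removed hrank hmin hme he (by omega : 1 ≤ colCount τ m) (k - z)
        rw [h2]
        push_cast
        ring
    rw [ha0, hd1, ha1]
    ring

end Main

/-- **VN-side derivative identity.** The partial derivative of the aggregate VN EXIT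
function `I_{EV,l}(·,ε)` with respect to its `m`-th argument, at the all-ones point,
equals `P^{l,m}(ε)`. -/
theorem deriv_IEVagg_eq_Pmat {n : ℕ} (hn : 1 ≤ n) (V : VNSide n) (hV : V.Good)
    (ε : ℝ) (hε : ε ∈ Set.Ioo (0 : ℝ) 1) (l m : Fin n) :
    deriv (fun x : ℝ => IEVagg V l (Function.update (fun _ => (1 : ℝ)) m x) ε) 1
      = Pmat V ε l m := by
  classical
  have hD : HasDerivAt (fun x : ℝ => IEVagg V l (Function.update (fun _ => (1 : ℝ)) m x) ε)
      (∑ γ ∈ Finset.univ.filter (fun γ => 0 < V.lam γ l),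
        V.lam γ l * (-((1 / (colCount (V.vn γ).τ l : ℝ)) *
          ∑ z ∈ Finset.range ((V.vn γ).k + 1), ε ^ z * (1 - ε) ^ ((V.vn γ).k - z) *
            ∑ t ∈ tRange (colCount (V.vn γ).τ) l,
              dCoef (V.vn γ).τ l m t * aVN (V.vn γ).G (V.vn γ).τ l t z))) 1 := by
    simp only [IEVagg]
    apply HasDerivAt.fun_sum
    intro γ _
    exact (hasDerivAt_IEV l m ε).const_mul (V.lam γ l)
  rw [hD.deriv]
  have hne : ∀ γ ∈ (Finset.univ : Finset (Fin V.nV)),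
      (if HasMinDistEq2 (V.vn γ).G then
        (V.lam γ l / (colCount (V.vn γ).τ l : ℝ)) *
          ∑ u ∈ Finset.Icc 1 (V.vn γ).k, (chi2 (V.vn γ).G (V.vn γ).τ u l m : ℝ) * ε ^ u
      else 0) ≠ 0 → 0 < V.lam γ l := by
    intro γ _ hfne
    by_contra hle
    have h0 : V.lam γ l = 0 := le_antisymm (not_lt.mp hle) (V.lam_nonneg γ l)
    apply hfne
    split
    · rw [h0]
      simp
    · rfl
  have hPm : Pmat V ε l m = ∑ γ ∈ Finset.univ.filter (fun γ => 0 < V.lam γ l),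
      (if HasMinDistEq2 (V.vn γ).G then
        (V.lam γ l / (colCount (V.vn γ).τ l : ℝ)) *
          ∑ u ∈ Finset.Icc 1 (V.vn γ).k, (chi2 (V.vn γ).G (V.vn γ).τ u l m : ℝ) * ε ^ u
      else 0) := by
    rw [Pmat, Matrix.of_apply]
    exact (Finset.sum_filter_of_ne hne).symm
  rw [hPm]
  apply Finset.sum_congr rfl
  intro γ hγ
  rw [Finset.mem_filter] at hγ
  have hpos := hγ.2
  have hq : 1 ≤ colCount (V.vn γ).τ l := (V.lam_pos_iff γ l).mp hpos
  obtain ⟨hrank, hmin⟩ := hV γ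
  have hval : ∀ z ∈ Finset.range ((V.vn γ).k + 1),
      ε ^ z * (1 - ε) ^ ((V.vn γ).k - z) *
        ∑ t ∈ tRange (colCount (V.vn γ).τ) l,
          dCoef (V.vn γ).τ l m t * aVN (V.vn γ).G (V.vn γ).τ l t z
      = -(∑ p ∈ pairSet (V.vn γ).G (V.vn γ).τ l m,
          ε ^ z * (1 - ε) ^ ((V.vn γ).k - z) *
            (((V.vn γ).k - wsol (V.vn γ).G p.1 p.2).choose ((V.vn γ).k - z) : ℝ)) := by
    intro z _
    rw [inner_sum_value hrank hmin hq, mul_neg, Finset.mul_sum]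
  rw [Finset.sum_congr rfl hval, Finset.sum_neg_distrib, Finset.sum_comm]
  have hbin : ∀ p ∈ pairSet (V.vn γ).G (V.vn γ).τ l m,
      ∑ z ∈ Finset.range ((V.vn γ).k + 1),
        ε ^ z * (1 - ε) ^ ((V.vn γ).k - z) *
          (((V.vn γ).k - wsol (V.vn γ).G p.1 p.2).choose ((V.vn γ).k - z) : ℝ)
      = ε ^ (wsol (V.vn γ).G p.1 p.2) := by
    intro p _
    exact binom_sum ε (wsol_le hrank)
  rw [Finset.sum_congr rfl hbin]
  by_cases heq2 : HasMinDistEq2 (V.vn γ).G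
  · rw [if_pos heq2, ← sum_chi2 hrank l m ε]
    ring
  · rw [if_neg heq2, pairSet_empty_of_not_eq2 hmin heq2 l m]
    simp


end MET
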